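/- Let G be a finite group and let m = m(G). Then G satisfies the replacement property if and only if for every irredundant generating sequence (g₁, …, g_m) of G of length m and every sequence of maximal subgroups (M₁, …, M_m) corresponding to (g₁, …, g_m), the radical ⋂ᵢ Mᵢ is the trivial subgroup. -/
import Mathlib


section Defs

variable {G : Type*} [Group G]

/-- `g` is a generating sequence of `G`: the set of its entries generates `G`. -/
def IsGenSeq {n : ℕ} (g : Fin n → G) : Prop :=
  Subgroup.closure (Set.range g) = ⊤

/-- `g` is irredundant: for each `i`, the entries other than `g i` do not generate `G`. -/
def IsIrred {n : ℕ} (g : Fin n → G) : Prop :=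
  ∀ i : Fin n, Subgroup.closure (g '' {j | j ≠ i}) ≠ ⊤

/-- `m(G)`: the largest length of an irredundant generating sequence of `G`. -/
noncomputable def maxIrredLen (G : Type*) [Group G] : ℕ :=
  sSup {n | ∃ g : Fin n → G, IsGenSeq g ∧ IsIrred g}

/-- `G` satisfies the replacement property. -/
def ReplacementProperty (G : Type*) [Group G] : Prop :=
  ∀ g : Fin (maxIrredLen G) → G, IsGenSeq g → IsIrred g →
    ∀ x : G, x ≠ 1 → ∃ i, IsGenSeq (Function.update g i x)

/-- `x` is a witness to failure of the replacement property for `G`. -/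
def IsWitnessToFailure {G : Type*} [Group G] (x : G) : Prop :=
  x ≠ 1 ∧ ∃ g : Fin (maxIrredLen G) → G, IsGenSeq g ∧ IsIrred g ∧
    ∀ i, ¬ IsGenSeq (Function.update g i x)

/-- A family of subgroups is in general position. -/
def InGeneralPosition {n : ℕ} (H : Fin n → Subgroup G) : Prop :=
  ∀ j, ¬ ((⨅ i ∈ ({j}ᶜ : Set (Fin n)), H i) ≤ H j)

/-- The sequence of subgroups `M` corresponds to the sequence of elements `g`. -/
def Corresponds {n : ℕ} (M : Fin n → Subgroup G) (g : Fin n → G) : Prop :=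
  (∀ i j, j ≠ i → g i ∈ M j) ∧ ∀ i, g i ∉ M i

end Defs

/-- `PSL(2,p)`. -/
abbrev PSL (p : ℕ) : Type := Matrix.ProjectiveSpecialLinearGroup (Fin 2) (ZMod p)

lemma range_update_aux {G : Type*} {n : ℕ} (g : Fin n → G) (i : Fin n) (x : G) :
    Set.range (Function.update g i x) = insert x (g '' {j | j ≠ i}) := by
  ext y
  simp only [Set.mem_range, Set.mem_insert_iff, Set.mem_image, Set.mem_setOf_eq]
  constructor
  · rintro ⟨j, rfl⟩
    by_cases h : j = i
    · subst h; simp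
    · right; exact ⟨j, h, by simp [Function.update_of_ne h]⟩
  · rintro (rfl | ⟨j, hj, rfl⟩)
    · exact ⟨i, by simp⟩
    · exact ⟨j, by simp [Function.update_of_ne hj]⟩

theorem replacement_property_iff_radical_trivial (G : Type*) [Group G] [Finite G] :
    ReplacementProperty G ↔
      ∀ g : Fin (maxIrredLen G) → G, IsGenSeq g → IsIrred g →
        ∀ M : Fin (maxIrredLen G) → Subgroup G, (∀ i, IsCoatom (M i)) →
          Corresponds M g → (⨅ i, M i) = ⊥ := by
  constructor
  · intro hRP g hgen hirr M hM ⟨hmem, hnot⟩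
    by_contra hne
    obtain ⟨x, hx, hx1⟩ := (⨅ i, M i).bot_or_exists_ne_one.resolve_left hne
    obtain ⟨i, hi⟩ := hRP g hgen hirr x hx1
    have : Subgroup.closure (Set.range (Function.update g i x)) ≤ M i := by
      rw [range_update_aux]
      apply Subgroup.closure_le _ |>.mpr
      rintro y (rfl | ⟨j, hj, rfl⟩)
      · exact (Subgroup.mem_iInf.mp hx) i
      · exact hmem j i hj.symm
    rw [hi] at this
    exact (hM i).1 (top_le_iff.mp this)
  · intro h g hgen hirr x hx1
    by_contra hno
    push_neg at hno
    have hM : ∀ i : Fin (maxIrredLen G), ∃ M : Subgroup G, IsCoatom M ∧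
        Subgroup.closure (Set.range (Function.update g i x)) ≤ M := by
      intro i
      rcases (eq_top_or_exists_le_coatom (Subgroup.closure (Set.range (Function.update g i x)))) with
        h' | ⟨M, hM, hle⟩
      · exact absurd h' (hno i)
      · exact ⟨M, hM, hle⟩
    choose M hMco hMle using hM
    have hxM : ∀ i, x ∈ M i := fun i => hMle i <| Subgroup.subset_closure <| by
      rw [range_update_aux]; exact Set.mem_insert _ _
    have hmem : ∀ i j, j ≠ i → g i ∈ M j := by
      intro i j hji
      exact hMle j <| Subgroup.subset_closure <| by
        rw [range_update_aux]
        exact Set.mem_insert_iff.mpr (Or.inr ⟨i, fun h => hji h.symm, rfl⟩)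
    have hnotmem : ∀ i, g i ∉ M i := by
      intro i hgi
      apply (hMco i).1
      rw [← top_le_iff, ← hgen]
      apply Subgroup.closure_le _ |>.mpr
      rintro y ⟨j, rfl⟩
      by_cases hji : j = i
      · subst hji; exact hgi
      · exact hmem j i fun h => hji h.symm
    have := h g hgen hirr M hMco ⟨hmem, hnotmem⟩
    have : x ∈ (⊥ : Subgroup G) := this ▸ Subgroup.mem_iInf.mpr hxM
    exact hx1 (Subgroup.mem_bot.mp this)
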